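/- Energy identity for one step of the second-order IEQ-DG scheme (identity (3.18) in the proof of Theorem 3.2): let Δt > 0, let T : H → H be a self-adjoint bounded linear operator, let u⁰, u¹, q⁰, q¹ ∈ V and U⁰ ∈ H, and set U¹ := U⁰ + (1/2) T (u¹ − u⁰). Suppose that for all φ, ψ ∈ V: ⟨(u¹ − u⁰)/Δt, φ⟩ + b((u⁰ + u¹)/2, φ) = −A(φ, (q⁰ + q¹)/2) − (1/2)⟨T (U¹ + U⁰), φ⟩, ⟨q⁰, ψ⟩ = A(u⁰, ψ) and ⟨q¹, ψ⟩ = A(u¹, ψ). Then E(u¹, q¹, U¹) = E(u⁰, q⁰, U⁰) − (1/Δt)‖u¹ − u⁰‖². -/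

import Mathlib

/-- Energy identity for one step of the second-order IEQ-DG scheme
(identity (3.18) in the proof of Theorem 3.2). -/
theorem stmt_6
    {H : Type*} [NormedAddCommGroup H] [InnerProductSpace ℝ H] [CompleteSpace H]
    (V : Submodule ℝ H) [FiniteDimensional ℝ V]
    (A : V →ₗ[ℝ] V →ₗ[ℝ] ℝ)
    (b : V →ₗ[ℝ] V →ₗ[ℝ] ℝ)
    (hb_symm : ∀ x y : V, b x y = b y x)
    (hb_pos : ∀ x : V, 0 ≤ b x x)
    (E : V → V → H → ℝ)
    (hE : ∀ (u q : V) (U : H), E u q U = (1/2) * ‖(q : H)‖^2 + ‖U‖^2 + (1/2) * b u u)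
    (Δt : ℝ) (hΔt : 0 < Δt)
    (T : H →L[ℝ] H)
    (hT : ∀ x y : H, (inner ℝ (T x) y : ℝ) = (inner ℝ x (T y) : ℝ))
    (u₀ u₁ q₀ q₁ : V) (U₀ U₁ : H)
    (hU₁ : U₁ = U₀ + (1/2 : ℝ) • T ((u₁ : H) - (u₀ : H)))
    (heq1 : ∀ φ : V,
      (inner ℝ ((1/Δt) • ((u₁ : H) - (u₀ : H))) (φ : H) : ℝ)
          + b ((1/2 : ℝ) • (u₀ + u₁)) φ
        = -A φ ((1/2 : ℝ) • (q₀ + q₁))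
          - (1/2) * (inner ℝ (T (U₁ + U₀)) (φ : H) : ℝ))
    (heq2 : ∀ ψ : V, (inner ℝ (q₀ : H) (ψ : H) : ℝ) = A u₀ ψ)
    (heq3 : ∀ ψ : V, (inner ℝ (q₁ : H) (ψ : H) : ℝ) = A u₁ ψ) :
    E u₁ q₁ U₁ = E u₀ q₀ U₀ - (1/Δt) * ‖(u₁ : H) - (u₀ : H)‖^2 := by
  have hTd : T ((u₁ : H) - (u₀ : H)) = (2 : ℝ) • (U₁ - U₀) := by
    rw [hU₁]; module
  -- b term
  have hb' : b ((1/2 : ℝ) • (u₀ + u₁)) (u₁ - u₀)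
      = (1/2) * b u₁ u₁ - (1/2) * b u₀ u₀ := by
    have h01 := hb_symm u₀ u₁
    simp only [map_smul, map_add, map_sub, LinearMap.smul_apply, LinearMap.add_apply,
      LinearMap.sub_apply, smul_eq_mul]
    linarith
  -- A term
  have hA : A (u₁ - u₀) ((1/2 : ℝ) • (q₀ + q₁))
      = (1/2) * ‖(q₁ : H)‖^2 - (1/2) * ‖(q₀ : H)‖^2 := by
    rw [map_sub, LinearMap.sub_apply, ← heq2, ← heq3]
    have hc := real_inner_comm (q₀ : H) (q₁ : H)
    push_cast
    simp only [real_inner_smul_right, inner_add_right, real_inner_self_eq_norm_sq]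
    linarith
  -- T term
  have hTterm : (inner ℝ (T (U₁ + U₀)) ((u₁ : H) - (u₀ : H)) : ℝ)
      = 2 * ‖U₁‖^2 - 2 * ‖U₀‖^2 := by
    rw [hT, hTd]
    have hc := real_inner_comm U₀ U₁
    simp only [real_inner_smul_right, inner_add_left, inner_sub_right,
      real_inner_self_eq_norm_sq]
    linarith
  have h1 := heq1 (u₁ - u₀)
  push_cast at h1
  rw [real_inner_smul_left, real_inner_self_eq_norm_sq, hb', hA, hTterm] at h1
  rw [hE, hE]
  linarith
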